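/- Let (D, Z(D); U_1, …, U_k) be a Robinson complex of a finite group G. Then for each i, the quotient U_i'/(U_i' ∩ Z(D)) is a simple non-abelian group and U_i' ∩ Z(D) = Φ(U_i') = Z(U_i'); in particular, U_i' is a quasi-simple group (a perfect group whose quotient by its center is simple). -/

import Mathlib

open Subgroup
open scoped Pointwise

/-- A partition of the set of all primes into pairwise disjoint nonempty blocks. -/
structure SigmaPartition : Type where
  blocks : Set (Set ℕ)
  nonempty : ∀ s ∈ blocks, s.Nonempty
  mem_prime : ∀ s ∈ blocks, ∀ p ∈ s, p.Prime
  pairwise_disjoint : ∀ s ∈ blocks, ∀ t ∈ blocks, s ≠ t → Disjoint s t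
  covers : ∀ p : ℕ, p.Prime → ∃ s ∈ blocks, p ∈ s

/-- `n` is a σ-primary number: all of its prime divisors lie in a single block of σ. -/
def IsSigmaPrimaryCard (σ : SigmaPartition) (n : ℕ) : Prop :=
  ∃ s ∈ σ.blocks, ∀ p : ℕ, p.Prime → p ∣ n → p ∈ s

/-- A group is σ-primary if all primes dividing its order lie in one block of σ. -/
def IsSigmaPrimary (σ : SigmaPartition) (X : Type*) [Group X] : Prop :=
  IsSigmaPrimaryCard σ (Nat.card X)

section

variable {G : Type*} [Group G]

/-- A subgroup is modular if it is a modular element (in the sense of Kurosh)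
of the lattice of all subgroups. -/
def IsModularSubgroup (M : Subgroup G) : Prop :=
  (∀ X Z : Subgroup G, X ≤ Z → X ⊔ (M ⊓ Z) = (X ⊔ M) ⊓ Z) ∧
  (∀ Y Z : Subgroup G, M ≤ Z → M ⊔ (Y ⊓ Z) = (M ⊔ Y) ⊓ Z)

/-- One step of a σ-subnormal chain: `A ≤ B` and either `A` is normal in `B` or
`B` modulo the normal core of `A` in `B` is σ-primary. -/
def SigmaStep (σ : SigmaPartition) (A B : Subgroup G) : Prop :=
  A ≤ B ∧ ((A.subgroupOf B).Normal ∨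
    IsSigmaPrimaryCard σ (Nat.card (↥B ⧸ (A.subgroupOf B).normalCore)))

/-- `A` is σ-subnormal in the ambient group. -/
def IsSigmaSubnormal (σ : SigmaPartition) (A : Subgroup G) : Prop :=
  ∃ (n : ℕ) (c : Fin (n + 1) → Subgroup G), c 0 = A ∧ c (Fin.last n) = ⊤ ∧
    ∀ i : Fin n, SigmaStep σ (c i.castSucc) (c i.succ)

/-- `A` is σ-quasinormal: σ-subnormal and modular. -/
def IsSigmaQuasinormal (σ : SigmaPartition) (A : Subgroup G) : Prop :=
  IsSigmaSubnormal σ A ∧ IsModularSubgroup A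

/-- `A` is σ-quasinormal in the intermediate subgroup `B`. -/
def IsSigmaQuasinormalIn (σ : SigmaPartition) (A B : Subgroup G) : Prop :=
  A ≤ B ∧ IsSigmaQuasinormal σ (A.subgroupOf B)

/-- `A` is σ-subquasinormal: there is a chain from `A` to the whole group with
each term σ-quasinormal in the next. -/
def IsSigmaSubquasinormal (σ : SigmaPartition) (A : Subgroup G) : Prop :=
  ∃ (n : ℕ) (c : Fin (n + 1) → Subgroup G), c 0 = A ∧ c (Fin.last n) = ⊤ ∧
    ∀ i : Fin n, IsSigmaQuasinormalIn σ (c i.castSucc) (c i.succ)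

/-- `H` is subnormal in the ambient group. -/
def IsSubnormalSubgroup (H : Subgroup G) : Prop :=
  ∃ (n : ℕ) (c : Fin (n + 1) → Subgroup G), c 0 = H ∧ c (Fin.last n) = ⊤ ∧
    ∀ i : Fin n, c i.castSucc ≤ c i.succ ∧ ((c i.castSucc).subgroupOf (c i.succ)).Normal

/-- The factor `H/K` (for `K ≤ H`) is cyclic, elementwise formulation. -/
def IsCyclicFactor (H K : Subgroup G) : Prop :=
  ∃ g ∈ H, ∀ h ∈ H, ∃ n : ℤ, (g ^ n)⁻¹ * h ∈ K

end

/-- `G` is a QσT-group: σ-quasinormality is transitive in `G`. -/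
def IsQSigmaT (σ : SigmaPartition) (G : Type*) [Group G] : Prop :=
  ∀ H K : Subgroup G, H ≤ K →
    IsSigmaQuasinormal σ (H.subgroupOf K) → IsSigmaQuasinormal σ K →
    IsSigmaQuasinormal σ H

/-- `(D, Z; U 1, …, U k)` is a Robinson complex of `G`. -/
def IsRobinsonComplex (G : Type*) [Group G] (D Z : Subgroup G)
    (k : ℕ) (U : Fin k → Subgroup G) : Prop :=
  D ≠ ⊥ ∧ D.Normal ∧ ⁅D, D⁆ = D ∧
  Z = (Subgroup.center ↥D).map D.subtype ∧
  Z = (frattini ↥D).map D.subtype ∧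
  (∀ i, Z ≤ U i ∧ U i ≤ D ∧ (U i).Normal) ∧
  (⨆ i, U i) = D ∧
  (∀ i, U i ⊓ (Z ⊔ ⨆ j ∈ ({j | j ≠ i} : Set (Fin k)), U j) = Z) ∧
  (∀ i, ¬ ⁅U i, U i⁆ ≤ Z) ∧
  (∀ i, ∀ N : Subgroup G, Z ≤ N → N ≤ U i → (N.subgroupOf (U i)).Normal →
    N = Z ∨ N = U i) ∧
  (∀ H K : Subgroup G, H.Normal → K.Normal → K < H → H ≤ Z →
    (∀ N : Subgroup G, N.Normal → K ≤ N → N ≤ H → N = K ∨ N = H) →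
    IsCyclicFactor H K)

/-- The largest normal p-subgroup `O_p(X)`. -/
def pCoreSubgroup (p : ℕ) (X : Type*) [Group X] : Subgroup X :=
  sSup {P : Subgroup X | P.Normal ∧ IsPGroup p ↥P}

/-- `G` satisfies `N_p`: whenever `N` is a soluble normal subgroup of `G`,
p'-elements of `G/N` induce power automorphisms on `O_p(G/N)`. -/
def SatisfiesNp (p : ℕ) (G : Type*) [Group G] : Prop :=
  ∀ (N : Subgroup G) [N.Normal], IsSolvable ↥N →
    ∀ x : G ⧸ N, ¬ p ∣ orderOf x →
      ∀ S : Subgroup (G ⧸ N), S ≤ pCoreSubgroup p (G ⧸ N) →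
        ∀ s ∈ S, x * s * x⁻¹ ∈ S

/-- `G` satisfies `P_p`: whenever `N` is a soluble normal subgroup of `G`,
every subgroup of `O_p(G/N)` is quasinormal in every Sylow p-subgroup of `G/N`. -/
def SatisfiesPp (p : ℕ) (G : Type*) [Group G] : Prop :=
  ∀ (N : Subgroup G) [N.Normal], IsSolvable ↥N →
    ∀ S : Subgroup (G ⧸ N), S ≤ pCoreSubgroup p (G ⧸ N) →
      ∀ P : Sylow p (G ⧸ N), ∀ T : Subgroup (G ⧸ N), T ≤ ↑P →
        (S : Set (G ⧸ N)) * (T : Set (G ⧸ N)) = (T : Set (G ⧸ N)) * (S : Set (G ⧸ N))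

/-- `X` is a non-abelian P-group of type `(p, q)`: `X = A ⋊ ⟨t⟩` with `A` a non-trivial
elementary abelian p-group and `t` of prime order `q ≠ p` inducing a non-trivial power
automorphism on `A`. -/
def IsPGroupOfType (p q : ℕ) (X : Type*) [Group X] : Prop :=
  p.Prime ∧ q.Prime ∧ p ≠ q ∧
  ∃ (A : Subgroup X) (t : X),
    A ≠ ⊥ ∧ (∀ a ∈ A, a ^ p = 1) ∧ (∀ a ∈ A, ∀ b ∈ A, a * b = b * a) ∧
    orderOf t = q ∧ A.Normal ∧ A ⊔ Subgroup.zpowers t = ⊤ ∧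
    A ⊓ Subgroup.zpowers t = ⊥ ∧
    (∀ S : Subgroup X, S ≤ A → ∀ s ∈ S, t * s * t⁻¹ ∈ S) ∧
    ∃ a ∈ A, t * a * t⁻¹ ≠ a

/-- `G` satisfies `Q_{σ(p,q)}`. -/
def SatisfiesQSigmaPQ (σ : SigmaPartition) (p q : ℕ) (G : Type*) [Group G] : Prop :=
  ∀ (N : Subgroup G) [N.Normal], IsSolvable ↥N →
    ∀ P : Subgroup (G ⧸ N), P.Normal → IsSigmaPrimary σ ↥P → IsPGroupOfType p q ↥P →
      ∀ S : Subgroup (G ⧸ N), S ≤ P → IsModularSubgroup S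

/-- `G` satisfies `M_{p,q}`. -/
def SatisfiesMpq (p q : ℕ) (G : Type*) [Group G] : Prop :=
  ∀ (N : Subgroup G) [N.Normal], IsSolvable ↥N →
    ∀ P : Subgroup (G ⧸ N), P.Normal → IsPGroupOfType p q ↥P →
      ∀ S : Subgroup (G ⧸ N), S ≤ P → IsModularSubgroup S

open scoped commutatorElement

lemma my_mem_center_map {G : Type*} [Group G] {D : Subgroup G} {x : G} :
    x ∈ (Subgroup.center ↥D).map D.subtype ↔ x ∈ D ∧ ∀ d ∈ D, x * d = d * x := by
  constructor
  · rintro ⟨⟨c, hc⟩, hmem, rfl⟩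
    refine ⟨hc, fun d hd => ?_⟩
    have := Subgroup.mem_center_iff.mp hmem ⟨d, hd⟩
    simpa using congrArg Subtype.val this.symm
  · rintro ⟨hxD, hcomm⟩
    exact ⟨⟨x, hxD⟩, Subgroup.mem_center_iff.mpr
      (fun g => Subtype.ext (by simpa using (hcomm g g.2).symm)), rfl⟩

lemma my_conj_comm_aux {G : Type*} [Group G] {z g d : G}
    (h : z * (g⁻¹ * d * g) = (g⁻¹ * d * g) * z) :
    (g * z * g⁻¹) * d = d * (g * z * g⁻¹) := by
  have h2 := congrArg (fun x => g * x * g⁻¹) h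
  simpa [mul_assoc] using h2

lemma my_comm_aux {G : Type*} [Group G] {v z v' z' : G}
    (hzv' : z * v' = v' * z) (hzz' : z * z' = z' * z) (hz'v : z' * v = v * z') :
    ⁅v * z, v' * z'⁆ = ⁅v, v'⁆ := by
  have hzb : z * (v' * z') = (v' * z') * z := by
    rw [← mul_assoc, hzv', mul_assoc, hzz', ← mul_assoc]
  have hz'vinv : z' * v⁻¹ = v⁻¹ * z' := by
    have := congrArg (fun x => v⁻¹ * x * v⁻¹) hz'v
    simpa [mul_assoc] using this.symm
  simp only [commutatorElement_def, mul_inv_rev]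
  calc v * z * (v' * z') * (z⁻¹ * v⁻¹) * (z'⁻¹ * v'⁻¹)
      = v * (z * (v' * z') * z⁻¹) * v⁻¹ * (z'⁻¹ * v'⁻¹) := by group
    _ = v * (v' * z') * v⁻¹ * (z'⁻¹ * v'⁻¹) := by rw [hzb, mul_inv_cancel_right]
    _ = v * v' * (z' * v⁻¹) * (z'⁻¹ * v'⁻¹) := by group
    _ = v * v' * (v⁻¹ * z') * (z'⁻¹ * v'⁻¹) := by rw [hz'vinv]
    _ = v * v' * v⁻¹ * v'⁻¹ := by group

lemma my_conj_mul_aux {G : Type*} [Group G] {v z x : G} (h : z * x = x * z) :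
    (v * z) * x * (v * z)⁻¹ = v * x * v⁻¹ := by
  rw [mul_inv_rev]
  calc v * z * x * (z⁻¹ * v⁻¹) = v * (z * x * z⁻¹) * v⁻¹ := by group
    _ = v * x * v⁻¹ := by rw [h, mul_inv_cancel_right]

lemma my_conj_mul_aux2 {G : Type*} [Group G] {v p z0 : G} (h : z0 * v = v * z0) :
    v * (p * z0) * v⁻¹ = (v * p * v⁻¹) * z0 := by
  have h' : z0 * v⁻¹ = v⁻¹ * z0 := by
    have := congrArg (fun x => v⁻¹ * x * v⁻¹) h
    simpa [mul_assoc] using this.symm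
  calc v * (p * z0) * v⁻¹ = v * p * (z0 * v⁻¹) := by group
    _ = v * p * (v⁻¹ * z0) := by rw [h']
    _ = v * p * v⁻¹ * z0 := by group

/-- Lemma 2.13(1): for a Robinson complex `(D, Z; U 1, …, U k)` of `G`, each derived
subgroup `(U i)'` satisfies `(U i)' ⊓ Z = Φ((U i)') = Z((U i)')`, the quotient of
`(U i)'` by this subgroup is simple non-abelian, and `(U i)'` is quasi-simple. -/
theorem robinson_derived_quasisimple (G : Type*) [Group G] [Finite G]
    (D Z : Subgroup G) (k : ℕ) (U : Fin k → Subgroup G)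
    (h : IsRobinsonComplex G D Z k U) (i : Fin k) :
    (⁅U i, U i⁆ : Subgroup G) ⊓ Z =
      (Subgroup.center ↥(⁅U i, U i⁆ : Subgroup G)).map (⁅U i, U i⁆ : Subgroup G).subtype ∧
    (⁅U i, U i⁆ : Subgroup G) ⊓ Z =
      (frattini ↥(⁅U i, U i⁆ : Subgroup G)).map (⁅U i, U i⁆ : Subgroup G).subtype ∧
    IsSimpleGroup (↥(⁅U i, U i⁆ : Subgroup G) ⧸ Subgroup.center ↥(⁅U i, U i⁆ : Subgroup G)) ∧
    (∃ x y : ↥(⁅U i, U i⁆ : Subgroup G) ⧸ Subgroup.center ↥(⁅U i, U i⁆ : Subgroup G),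
      x * y ≠ y * x) ∧
    ⁅(⁅U i, U i⁆ : Subgroup G), (⁅U i, U i⁆ : Subgroup G)⁆ = ⁅U i, U i⁆ := by
  obtain ⟨hDne, hDnorm, hDperf, hZc, hZf, hUprop, hsup, hint, hnab, hmaxN, hcyc⟩ := h
  obtain ⟨hZU, hUD, hUnorm⟩ := hUprop i
  haveI := hDnorm
  haveI := hUnorm
  set V : Subgroup G := ⁅U i, U i⁆ with hVdef
  haveI hVnorm : V.Normal := Subgroup.commutator_normal _ _
  have hVU : V ≤ U i := Subgroup.commutator_le_left _ _
  have hVD : V ≤ D := hVU.trans hUD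
  have hZD : Z ≤ D := by rw [hZc]; exact map_subtype_le _
  have hZcent : ∀ z ∈ Z, ∀ d ∈ D, z * d = d * z := by
    intro z hz d hd
    rw [hZc, my_mem_center_map] at hz
    exact hz.2 d hd
  have hVnab : ¬ V ≤ Z := hnab i
  haveI hZnorm : Z.Normal := by
    constructor
    intro z hz g
    rw [hZc, my_mem_center_map] at hz ⊢
    obtain ⟨hzD, hzc⟩ := hz
    refine ⟨hDnorm.conj_mem z hzD g, fun d hd => ?_⟩
    have hd' : g⁻¹ * d * g ∈ D := by simpa using hDnorm.conj_mem d hd g⁻¹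
    exact my_conj_comm_aux (hzc _ hd')
  have hdecomp : ∀ (A : Subgroup G) (x : G), x ∈ A ⊔ Z → ∃ a ∈ A, ∃ z ∈ Z, x = a * z := by
    intro A x hx
    have hx' : x ∈ (↑A * ↑Z : Set G) := by
      rw [← Subgroup.mul_normal A Z]; exact hx
    obtain ⟨a, ha, z, hz, rfl⟩ := hx'
    exact ⟨a, ha, z, hz, rfl⟩
  have hUeq : U i = V ⊔ Z := by
    haveI hn : (V ⊔ Z).Normal := Subgroup.sup_normal _ _
    rcases hmaxN i (V ⊔ Z) le_sup_right (sup_le hVU hZU) (hn.subgroupOf _) with hbad | hgood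
    · exact absurd (le_sup_left.trans hbad.le) hVnab
    · exact hgood.symm
  have hVperf : ⁅V, V⁆ = V := by
    refine le_antisymm (Subgroup.commutator_mono hVU hVU) ?_
    conv_lhs => rw [hVdef]
    rw [Subgroup.commutator_le]
    intro a ha b hb
    rw [hUeq] at ha hb
    obtain ⟨v, hv, z, hz, rfl⟩ := hdecomp _ _ ha
    obtain ⟨v', hv', z', hz', rfl⟩ := hdecomp _ _ hb
    rw [my_comm_aux (hZcent z hz v' (hVD hv')) (hZcent z hz z' (hZD hz'))
      (hZcent z' hz' v (hVD hv))]
    exact Subgroup.commutator_mem_commutator hv hv'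
  have hVne : V ≠ ⊥ := fun hbot => hVnab (hbot ▸ bot_le)
  have hCg_def : ∀ x : G, x ∈ (Subgroup.center ↥V).map V.subtype ↔
      x ∈ V ∧ ∀ v ∈ V, x * v = v * x := fun x => my_mem_center_map
  set Cg : Subgroup G := (Subgroup.center ↥V).map V.subtype with hCgdef
  have hCgV : Cg ≤ V := map_subtype_le _
  haveI hCgnorm : Cg.Normal := by
    constructor
    intro x hx g
    rw [hCg_def] at hx
    rw [hCg_def]
    obtain ⟨hxV, hxc⟩ := hx
    refine ⟨hVnorm.conj_mem x hxV g, fun d hd => ?_⟩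
    have hd' : g⁻¹ * d * g ∈ V := by simpa using hVnorm.conj_mem d hd g⁻¹
    exact my_conj_comm_aux (hxc _ hd')
  have hCgZ : Cg ≤ Z := by
    haveI hn : (Cg ⊔ Z).Normal := Subgroup.sup_normal _ _
    rcases hmaxN i (Cg ⊔ Z) le_sup_right (sup_le (hCgV.trans hVU) hZU)
      (hn.subgroupOf _) with hok | hbad
    · exact le_sup_left.trans hok.le
    · exfalso
      apply hVnab
      have hle : V ≤ ⊥ := by
        conv_lhs => rw [hVdef]
        rw [Subgroup.commutator_le]
        intro a ha b hb
        rw [← hbad] at ha hb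
        obtain ⟨c, hc, z, hz, rfl⟩ := hdecomp _ _ ha
        obtain ⟨c', hc', z', hz', rfl⟩ := hdecomp _ _ hb
        rw [my_comm_aux (hZcent z hz c' (hVD (hCgV hc'))) (hZcent z hz z' (hZD hz'))
          (hZcent z' hz' c (hVD (hCgV hc)))]
        rw [Subgroup.mem_bot, commutatorElement_eq_one_iff_mul_comm]
        exact ((hCg_def c).mp hc).2 c' (hCgV hc')
      exact hle.trans bot_le
  have hconj1 : V ⊓ Z = Cg := by
    refine le_antisymm ?_ (le_inf hCgV hCgZ)
    intro x hx
    rw [Subgroup.mem_inf] at hx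
    rw [hCg_def]
    exact ⟨hx.1, fun v hv => hZcent x hx.2 v (hVD hv)⟩
  -- non-abelian quotient
  have hnonab : ∃ x y : ↥V ⧸ Subgroup.center ↥V, x * y ≠ y * x := by
    by_contra hcon
    push_neg at hcon
    apply hVnab
    have hle : ⁅V, V⁆ ≤ Z := by
      rw [Subgroup.commutator_le]
      intro a ha b hb
      set x : ↥V := ⟨a, ha⟩
      set y : ↥V := ⟨b, hb⟩
      have h1 : ((QuotientGroup.mk' (Subgroup.center ↥V)) ⁅x, y⁆) = 1 := by
        rw [map_commutatorElement, commutatorElement_eq_one_iff_mul_comm]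
        exact hcon _ _
      have hcen : ⁅x, y⁆ ∈ Subgroup.center ↥V := by
        rwa [← QuotientGroup.ker_mk' (Subgroup.center ↥V), MonoidHom.mem_ker]
      refine hCgZ ?_
      refine ⟨⁅x, y⁆, hcen, ?_⟩
      rw [map_commutatorElement]
      rfl
    rwa [hVperf] at hle
  obtain ⟨xq, yq, hxyq⟩ := hnonab
  haveI hQnt : Nontrivial (↥V ⧸ Subgroup.center ↥V) := ⟨⟨xq * yq, yq * xq, hxyq⟩⟩
  -- key normality fact
  have key_normal : ∀ P : Subgroup ↥V, P.Normal →
      ((P.map V.subtype ⊔ Z).subgroupOf (U i)).Normal := by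
    intro P hP
    have hPgV : P.map V.subtype ≤ V := map_subtype_le _
    rw [Subgroup.normal_subgroupOf_iff (sup_le (hPgV.trans hVU) hZU)]
    intro x u hx hu
    obtain ⟨p, hp, z0, hz0, rfl⟩ := hdecomp _ _ hx
    rw [hUeq] at hu
    obtain ⟨v, hv, z, hz, rfl⟩ := hdecomp _ _ hu
    obtain ⟨q, hq, rfl⟩ := hp
    simp only [Subgroup.coe_subtype]
    have h1 : (v * z) * ((q : G) * z0) * (v * z)⁻¹ = v * ((q : G) * z0) * v⁻¹ :=
      my_conj_mul_aux (hZcent z hz _ (mul_mem (hVD q.2) (hZD hz0)))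
    have h2 : v * ((q : G) * z0) * v⁻¹ = (v * (q : G) * v⁻¹) * z0 :=
      my_conj_mul_aux2 (hZcent z0 hz0 v (hVD hv))
    rw [h1, h2]
    exact Subgroup.mul_mem _
      (Subgroup.mem_sup_left ⟨⟨v, hv⟩ * q * ⟨v, hv⟩⁻¹, hP.conj_mem q hq ⟨v, hv⟩, rfl⟩)
      (Subgroup.mem_sup_right hz0)
  -- simplicity
  have hsimp : IsSimpleGroup (↥V ⧸ Subgroup.center ↥V) := by
    refine { eq_bot_or_eq_top_of_normal := ?_ }
    intro N hN
    have hPnorm : (N.comap (QuotientGroup.mk' (Subgroup.center ↥V))).Normal := hN.comap _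
    have hPgV : (N.comap (QuotientGroup.mk' (Subgroup.center ↥V))).map V.subtype ≤ V :=
      map_subtype_le _
    rcases hmaxN i ((N.comap (QuotientGroup.mk' (Subgroup.center ↥V))).map V.subtype ⊔ Z)
      le_sup_right (sup_le (hPgV.trans hVU) hZU) (key_normal _ hPnorm) with hz | hu
    · left
      have hPZ : (N.comap (QuotientGroup.mk' (Subgroup.center ↥V))).map V.subtype ≤ Z :=
        le_sup_left.trans hz.le
      have hPc : N.comap (QuotientGroup.mk' (Subgroup.center ↥V)) ≤ Subgroup.center ↥V := by
        intro q hq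
        have hm : (q : G) ∈ Cg := by
          rw [← hconj1]
          exact Subgroup.mem_inf.mpr ⟨q.2, hPZ ⟨q, hq, rfl⟩⟩
        rw [hCg_def] at hm
        exact Subgroup.mem_center_iff.mpr fun g =>
          Subtype.ext (by simpa using (hm.2 g g.2).symm)
      rw [eq_bot_iff]
      intro n hn
      obtain ⟨x, rfl⟩ := QuotientGroup.mk'_surjective (Subgroup.center ↥V) n
      have hxP : x ∈ N.comap (QuotientGroup.mk' (Subgroup.center ↥V)) := hn
      rw [Subgroup.mem_bot, ← MonoidHom.mem_ker, QuotientGroup.ker_mk']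
      exact hPc hxP
    · right
      have hVP : V ≤ (N.comap (QuotientGroup.mk' (Subgroup.center ↥V))).map V.subtype := by
        have hle : ⁅V, V⁆ ≤ (N.comap (QuotientGroup.mk' (Subgroup.center ↥V))).map V.subtype := by
          rw [Subgroup.commutator_le]
          intro a ha b hb
          have ha' : a ∈ (N.comap (QuotientGroup.mk' (Subgroup.center ↥V))).map V.subtype ⊔ Z := by
            rw [hu]; exact hVU ha
          have hb' : b ∈ (N.comap (QuotientGroup.mk' (Subgroup.center ↥V))).map V.subtype ⊔ Z := by
            rw [hu]; exact hVU hb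
          obtain ⟨p, hp, z, hz, rfl⟩ := hdecomp _ _ ha'
          obtain ⟨p', hp', z', hz', rfl⟩ := hdecomp _ _ hb'
          obtain ⟨q, hq, rfl⟩ := hp
          obtain ⟨q', hq', rfl⟩ := hp'
          simp only [Subgroup.coe_subtype]
          rw [my_comm_aux (hZcent z hz _ (hVD q'.2)) (hZcent z hz z' (hZD hz'))
            (hZcent z' hz' _ (hVD q.2))]
          have hcm : ⁅q, q'⁆ ∈ N.comap (QuotientGroup.mk' (Subgroup.center ↥V)) := by
            rw [commutatorElement_def]
            exact mul_mem (mul_mem (mul_mem hq hq') (inv_mem hq)) (inv_mem hq')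
          exact ⟨⁅q, q'⁆, hcm, by rw [map_commutatorElement]; rfl⟩
        rwa [hVperf] at hle
      have hPtop : N.comap (QuotientGroup.mk' (Subgroup.center ↥V)) = ⊤ := by
        rw [eq_top_iff]
        intro q _
        obtain ⟨q', hq', heq⟩ := hVP q.2
        exact (Subtype.ext heq : q' = q) ▸ hq'
      have hN2 := Subgroup.map_comap_eq_self_of_surjective
        (QuotientGroup.mk'_surjective (Subgroup.center ↥V)) N
      rw [hPtop, Subgroup.map_top_of_surjective _
        (QuotientGroup.mk'_surjective (Subgroup.center ↥V))] at hN2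
      exact hN2.symm
  -- perfectness of ↥V as a group
  have hVtop_perf : ⁅(⊤ : Subgroup ↥V), (⊤ : Subgroup ↥V)⁆ = ⊤ := by
    apply Subgroup.map_injective V.subtype_injective
    rw [Subgroup.map_commutator, ← MonoidHom.range_eq_map, Subgroup.range_subtype]
    exact hVperf
  -- frattini ≥
  have hfr_ge : V ⊓ Z ≤ (frattini ↥V).map V.subtype := by
    intro x hx
    rw [Subgroup.mem_inf] at hx
    refine ⟨⟨x, hx.1⟩, ?_, rfl⟩
    have hxc : (⟨x, hx.1⟩ : ↥V) ∈ Subgroup.center ↥V :=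
      Subgroup.mem_center_iff.mpr fun g =>
        Subtype.ext (by simpa using (hZcent x hx.2 g (hVD g.2)).symm)
    show (⟨x, hx.1⟩ : ↥V) ∈ frattini ↥V
    rw [frattini, Order.radical, Subgroup.mem_iInf]
    intro M
    rw [Subgroup.mem_iInf]
    intro hM
    by_contra hxM
    have hlt : M < M ⊔ Subgroup.zpowers (⟨x, hx.1⟩ : ↥V) := by
      refine lt_of_le_of_ne le_sup_left fun heq => hxM ?_
      rw [heq]
      exact Subgroup.mem_sup_right (Subgroup.mem_zpowers _)
    have htop : M ⊔ Subgroup.zpowers (⟨x, hx.1⟩ : ↥V) = ⊤ := hM.2 _ hlt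
    have hzc : Subgroup.zpowers (⟨x, hx.1⟩ : ↥V) ≤ Subgroup.center ↥V :=
      Subgroup.zpowers_le.mpr hxc
    haveI : (Subgroup.zpowers (⟨x, hx.1⟩ : ↥V)).Normal := by
      constructor
      intro n hn g
      have he : g * n * g⁻¹ = n := by
        rw [Subgroup.mem_center_iff.mp (hzc hn) g, mul_inv_cancel_right]
      rwa [he]
    apply hM.1
    rw [eq_top_iff, ← hVtop_perf, Subgroup.commutator_le]
    intro a _ b _
    have hdec : ∀ c : ↥V, ∃ m ∈ M, ∃ s ∈ Subgroup.zpowers (⟨x, hx.1⟩ : ↥V), c = m * s := by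
      intro c
      have hc : c ∈ (↑M * ↑(Subgroup.zpowers (⟨x, hx.1⟩ : ↥V)) : Set ↥V) := by
        rw [← Subgroup.mul_normal, htop]
        exact Subgroup.mem_top c
      obtain ⟨m, hm, s, hs, rfl⟩ := hc
      exact ⟨m, hm, s, hs, rfl⟩
    obtain ⟨m, hm, s, hs, rfl⟩ := hdec a
    obtain ⟨m', hm', s', hs', rfl⟩ := hdec b
    have hscen := fun (w : ↥V) => Subgroup.mem_center_iff.mp (hzc hs) w
    have hscen' := fun (w : ↥V) => Subgroup.mem_center_iff.mp (hzc hs') w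
    rw [my_comm_aux (hscen m').symm (hscen' s) (hscen' m).symm]
    rw [commutatorElement_def]
    exact mul_mem (mul_mem (mul_mem hm hm') (inv_mem hm)) (inv_mem hm')
  -- frattini ≤
  have hfr_le : (frattini ↥V).map V.subtype ≤ Z := by
    haveI hfnorm : (frattini ↥V).Normal := inferInstance
    rcases hmaxN i ((frattini ↥V).map V.subtype ⊔ Z) le_sup_right
      (sup_le ((map_subtype_le _).trans hVU) hZU) (key_normal _ hfnorm) with hok | hbad
    · exact le_sup_left.trans hok.le
    · exfalso
      have hVF : V ≤ (frattini ↥V).map V.subtype := by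
        intro v hv
        have hv' : v ∈ (frattini ↥V).map V.subtype ⊔ Z := by rw [hbad]; exact hVU hv
        obtain ⟨f, hf, z, hz, rfl⟩ := hdecomp _ _ hv'
        have hfV : f ∈ V := map_subtype_le _ hf
        have hzV : z ∈ V := by
          have he : z = f⁻¹ * (f * z) := by group
          rw [he]
          exact mul_mem (inv_mem hfV) hv
        exact mul_mem hf (hfr_ge (Subgroup.mem_inf.mpr ⟨hzV, hz⟩))
      have hftop : frattini ↥V = ⊤ := by
        apply Subgroup.map_injective V.subtype_injective
        rw [← MonoidHom.range_eq_map, Subgroup.range_subtype]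
        exact le_antisymm (map_subtype_le _) hVF
      haveI : Nontrivial ↥V := (Subgroup.nontrivial_iff_ne_bot V).mpr hVne
      rcases eq_top_or_exists_le_coatom (⊥ : Subgroup ↥V) with htop | ⟨M, hM, _⟩
      · exact absurd htop bot_ne_top
      · have hle := frattini_le_coatom hM
        rw [hftop] at hle
        exact hM.1 (top_le_iff.mp hle)
  exact ⟨hconj1, le_antisymm hfr_ge (le_inf (map_subtype_le _) hfr_le),
    hsimp, ⟨xq, yq, hxyq⟩, hVperf⟩
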